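/- Let $F:\mathbb{R}^d\to\mathbb{R}$ be $L$-smooth with $F^* = \inf F > -\infty$. Define $x_{t+1} = x_t - \frac{\eta}{b_t}\nabla F(x_t)$ with $b_t = \sqrt{b_0^2 + \sum_{i=1}^t\|\nabla F(x_i)\|^2}$, $\eta, b_0 > 0$. Then $b_T \le b_0 + \frac{2(F(x_1)-F^*)}{\eta} + 2\eta L \log^+\frac{\eta L}{b_0}$. -/

import Mathlib

open RealInnerProductSpace Finset

theorem stmt_6 {d : ℕ} (F : EuclideanSpace ℝ (Fin d) → ℝ)
    (Fstar L η b₀ : ℝ) (T : ℕ)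
    (hL : 0 < L) (hη : 0 < η) (hb₀ : 0 < b₀)
    (hdiff : Differentiable ℝ F)
    (hinf : IsGLB (Set.range F) Fstar)
    (hsmooth : ∀ x y, F x ≤ F y + ⟪gradient F y, x - y⟫ + L / 2 * ‖x - y‖ ^ 2)
    (x : ℕ → EuclideanSpace ℝ (Fin d)) (b : ℕ → ℝ)
    (hb : ∀ t, b t = Real.sqrt (b₀ ^ 2 + ∑ i ∈ Finset.Icc 1 t, ‖gradient F (x i)‖ ^ 2))
    (hx : ∀ t, x (t + 1) = x t - (η / b t) • gradient F (x t)) :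
    b T ≤ b₀ + 2 * (F (x 1) - Fstar) / η
      + 2 * η * L * max (Real.log (η * L / b₀)) 0 := by
  classical
  set g : ℕ → EuclideanSpace ℝ (Fin d) := fun t => gradient F (x t) with hg
  set G : ℕ → ℝ := fun t => ‖g t‖ ^ 2 with hGdef
  have hηL : 0 < η * L := mul_pos hη hL
  have hGnn : ∀ t, 0 ≤ G t := fun t => sq_nonneg _
  have hsumnn : ∀ t, 0 ≤ ∑ i ∈ Icc 1 t, G i := fun t => Finset.sum_nonneg fun i _ => hGnn i
  have hbsq : ∀ t, b t ^ 2 = b₀ ^ 2 + ∑ i ∈ Icc 1 t, G i := by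
    intro t
    rw [hb t, Real.sq_sqrt]
    have := hsumnn t
    positivity
  have hblb : ∀ t, b₀ ≤ b t := by
    intro t
    rw [hb t]
    have h1 : b₀ = Real.sqrt (b₀ ^ 2) := (Real.sqrt_sq hb₀.le).symm
    rw [h1]
    exact Real.sqrt_le_sqrt (by have := hsumnn t; nlinarith [Real.sq_sqrt hb₀.le])
  have hbpos : ∀ t, 0 < b t := fun t => lt_of_lt_of_le hb₀ (hblb t)
  have hb0 : b 0 = b₀ := by
    rw [hb 0]
    simp [Real.sqrt_sq hb₀.le]
  have hmono : Monotone b := by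
    intro s t hst
    rw [hb s, hb t]
    apply Real.sqrt_le_sqrt
    have hsub : Icc 1 s ⊆ Icc 1 t := Finset.Icc_subset_Icc le_rfl hst
    have := Finset.sum_le_sum_of_subset_of_nonneg hsub (fun i _ _ => hGnn i)
    linarith
  have hstep : ∀ t, b (t + 1) ^ 2 = b t ^ 2 + G (t + 1) := by
    intro t
    rw [hbsq, hbsq, Finset.sum_Icc_succ_top (Nat.le_add_left 1 t)]
    ring
  set D : ℕ → ℝ := fun t => -(η / b t) * G t + L / 2 * (η / b t) ^ 2 * G t with hDdef
  have descent : ∀ t, F (x (t + 1)) ≤ F (x t) + D t := by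
    intro t
    have h := hsmooth (x (t + 1)) (x t)
    have hd : x (t + 1) - x t = -((η / b t) • g t) := by
      rw [hx t]; abel
    rw [hd] at h
    rw [inner_neg_right, real_inner_smul_right, real_inner_self_eq_norm_sq, norm_neg,
      norm_smul] at h
    have hns : (‖(η / b t : ℝ)‖ * ‖g t‖) ^ 2 = (η / b t) ^ 2 * ‖g t‖ ^ 2 := by
      rw [mul_pow, Real.norm_eq_abs, sq_abs]
    rw [hns] at h
    calc F (x (t + 1)) ≤ F (x t) + -(η / b t * ‖g t‖ ^ 2) + L / 2 * ((η / b t) ^ 2 * ‖g t‖ ^ 2) := h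
      _ = F (x t) + D t := by simp only [hDdef, hGdef]; ring
  have tele1 : ∀ t, b (t + 1) - b t ≤ G (t + 1) / b (t + 1) := by
    intro t
    rw [le_div_iff₀ (hbpos (t + 1))]
    nlinarith [hstep t, hbpos t, hmono (Nat.le_succ t)]
  have tele2 : ∀ t, G (t + 1) / b (t + 1) ^ 2 ≤ 2 * (Real.log (b (t + 1)) - Real.log (b t)) := by
    intro t
    have hp0 : (0 : ℝ) < b t ^ 2 := pow_pos (hbpos t) 2
    have hp1 : (0 : ℝ) < b (t + 1) ^ 2 := pow_pos (hbpos (t + 1)) 2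
    have hu : (0 : ℝ) < b t ^ 2 / b (t + 1) ^ 2 := div_pos hp0 hp1
    have hlog := Real.log_le_sub_one_of_pos hu
    have hld : Real.log (b t ^ 2 / b (t + 1) ^ 2)
        = 2 * Real.log (b t) - 2 * Real.log (b (t + 1)) := by
      rw [Real.log_div hp0.ne' hp1.ne', Real.log_pow, Real.log_pow]
      push_cast; ring
    rw [hld] at hlog
    have hGe : G (t + 1) / b (t + 1) ^ 2 = 1 - b t ^ 2 / b (t + 1) ^ 2 := by
      rw [eq_sub_iff_add_eq, ← add_div, div_eq_one_iff_eq hp1.ne']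
      linarith [hstep t]
    rw [hGe]
    linarith
  have L3 : ∀ a c, a ≤ c → F (x (c + 1)) ≤ F (x (a + 1)) + ∑ t ∈ Icc (a + 1) c, D t := by
    intro a c hac
    induction c, hac using Nat.le_induction with
    | base =>
      rw [show Icc (a + 1) a = ∅ from Finset.Icc_eq_empty (by omega)]
      simp
    | succ n hn ih =>
      rw [Finset.sum_Icc_succ_top (by omega : a + 1 ≤ n + 1)]
      have := descent (n + 1)
      linarith
  have L1sum : ∀ a c, a ≤ c → b c - b a ≤ ∑ t ∈ Icc (a + 1) c, G t / b t := by
    intro a c hac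
    induction c, hac using Nat.le_induction with
    | base =>
      rw [show Icc (a + 1) a = ∅ from Finset.Icc_eq_empty (by omega)]
      simp
    | succ n hn ih =>
      rw [Finset.sum_Icc_succ_top (by omega : a + 1 ≤ n + 1)]
      have := tele1 n
      linarith
  have L2sum : ∀ a c, a ≤ c →
      ∑ t ∈ Icc (a + 1) c, G t / b t ^ 2 ≤ 2 * (Real.log (b c) - Real.log (b a)) := by
    intro a c hac
    induction c, hac using Nat.le_induction with
    | base =>
      rw [show Icc (a + 1) a = ∅ from Finset.Icc_eq_empty (by omega)]
      simp
    | succ n hn ih =>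
      rw [Finset.sum_Icc_succ_top (by omega : a + 1 ≤ n + 1)]
      have := tele2 n
      linarith
  have hFs1 : Fstar ≤ F (x 1) := hinf.1 (Set.mem_range_self _)
  have hΔnn : 0 ≤ 2 * (F (x 1) - Fstar) / η := by
    apply div_nonneg _ hη.le
    linarith
  have hM0 : 0 ≤ 2 * η * L * max (Real.log (η * L / b₀)) 0 :=
    mul_nonneg (by positivity) (le_max_right _ _)
  by_cases hcase : b T ≤ η * L
  · -- Case 1: b T ≤ ηL
    by_cases hcb : η * L ≤ b₀
    · linarith
    · push_neg at hcb
      have h1lt : 1 < η * L / b₀ := (one_lt_div hb₀).mpr hcb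
      have hMeq : max (Real.log (η * L / b₀)) 0 = Real.log (η * L / b₀) :=
        max_eq_left (Real.log_nonneg h1lt.le)
      have hlb : 1 - b₀ / (η * L) ≤ Real.log (η * L / b₀) := by
        have h2 := Real.log_le_sub_one_of_pos (show (0:ℝ) < b₀ / (η * L) by positivity)
        have hinv : Real.log (b₀ / (η * L)) = -Real.log (η * L / b₀) := by
          rw [Real.log_div hb₀.ne' hηL.ne', Real.log_div hηL.ne' hb₀.ne']
          ring
        rw [hinv] at h2
        linarith
      have hmul : 2 * η * L * (1 - b₀ / (η * L)) = 2 * η * L - 2 * b₀ := by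
        field_simp
      have h3 : 2 * η * L - 2 * b₀ ≤ 2 * η * L * max (Real.log (η * L / b₀)) 0 := by
        rw [hMeq, ← hmul]
        exact mul_le_mul_of_nonneg_left hlb (by positivity)
      linarith
  · -- Case 2: η L < b T
    push_neg at hcase
    obtain ⟨τ, hτT, hτlog, hτlarge⟩ :
        ∃ τ, τ ≤ T ∧ (Real.log (b τ) - Real.log b₀ ≤ max (Real.log (η * L / b₀)) 0) ∧
          ∀ t, τ < t → t ≤ T → η * L ≤ b t := by
      by_cases hcb : η * L ≤ b₀
      · exact ⟨0, Nat.zero_le _, by rw [hb0]; simp,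
          fun t _ _ => le_trans hcb (hblb t)⟩
      · push_neg at hcb
        refine ⟨Nat.findGreatest (fun t => b t ≤ η * L) T, Nat.findGreatest_le T, ?_, ?_⟩
        · have hP0 : b 0 ≤ η * L := by rw [hb0]; exact hcb.le
          have hspec : b (Nat.findGreatest (fun t => b t ≤ η * L) T) ≤ η * L :=
            Nat.findGreatest_spec (P := fun t => b t ≤ η * L) (Nat.zero_le T) hP0
          have hlog1 : Real.log (b (Nat.findGreatest (fun t => b t ≤ η * L) T))
              ≤ Real.log (η * L) := Real.log_le_log (hbpos _) hspec
          have hdivlog : Real.log (η * L / b₀) = Real.log (η * L) - Real.log b₀ :=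
            Real.log_div hηL.ne' hb₀.ne'
          have : Real.log (b (Nat.findGreatest (fun t => b t ≤ η * L) T)) - Real.log b₀
              ≤ Real.log (η * L / b₀) := by rw [hdivlog]; linarith
          exact le_trans this (le_max_left _ _)
        · intro t ht htT
          have := Nat.findGreatest_is_greatest ht htT
          simp only [not_le] at this
          exact this.le
    -- Phase 1: bound the possible increase of F up to step τ
    have hph1 : F (x (τ + 1)) ≤ F (x 1)
        + (L * η ^ 2 * (Real.log (b τ) - Real.log b₀) - η * (b τ - b₀)) := by
      have h3 := L3 0 τ (Nat.zero_le _)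
      have hsplit : ∑ t ∈ Icc 1 τ, D t
          = -η * (∑ t ∈ Icc 1 τ, G t / b t)
            + L * η ^ 2 / 2 * (∑ t ∈ Icc 1 τ, G t / b t ^ 2) := by
        rw [Finset.mul_sum, Finset.mul_sum, ← Finset.sum_add_distrib]
        apply Finset.sum_congr rfl
        intro t _
        have hbt := (hbpos t).ne'
        simp only [hDdef]
        field_simp
      have h1 := L1sum 0 τ (Nat.zero_le _)
      have h2 := L2sum 0 τ (Nat.zero_le _)
      rw [hb0] at h1 h2
      simp only [Nat.zero_add] at h3
      have hm1 : η * (b τ - b₀) ≤ η * ∑ t ∈ Icc 1 τ, G t / b t :=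
        mul_le_mul_of_nonneg_left h1 hη.le
      have hm2 : L * η ^ 2 / 2 * (∑ t ∈ Icc 1 τ, G t / b t ^ 2)
          ≤ L * η ^ 2 / 2 * (2 * (Real.log (b τ) - Real.log b₀)) :=
        mul_le_mul_of_nonneg_left h2 (by positivity)
      have hDs : ∑ t ∈ Icc 1 τ, D t
          ≤ L * η ^ 2 * (Real.log (b τ) - Real.log b₀) - η * (b τ - b₀) := by
        rw [hsplit]; nlinarith
      linarith
    -- Phase 2: genuine descent after step τ
    have hph2 : F (x (T + 1)) ≤ F (x (τ + 1)) - η / 2 * (b T - b τ) := by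
      have h3 := L3 τ T hτT
      have hDb : ∀ t ∈ Icc (τ + 1) T, D t ≤ -(η / 2) * (G t / b t) := by
        intro t ht
        simp only [Finset.mem_Icc] at ht
        have hbt : η * L ≤ b t := hτlarge t (by omega) ht.2
        have hbtp := hbpos t
        have hG := hGnn t
        have hfac : -(η / b t) * G t + L / 2 * (η / b t) ^ 2 * G t + (η / 2) * (G t / b t)
            = G t / b t ^ 2 * (η / 2) * (η * L - b t) := by
          field_simp
          ring
        have hnp : G t / b t ^ 2 * (η / 2) * (η * L - b t) ≤ 0 :=
          mul_nonpos_of_nonneg_of_nonpos (by positivity) (by linarith)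
        simp only [hDdef]
        linarith [hfac.le, hfac.ge]
      have hsum : ∑ t ∈ Icc (τ + 1) T, D t ≤ ∑ t ∈ Icc (τ + 1) T, -(η / 2) * (G t / b t) :=
        Finset.sum_le_sum hDb
      have h1 := L1sum τ T hτT
      have hms : ∑ t ∈ Icc (τ + 1) T, -(η / 2) * (G t / b t)
          = -(η / 2) * ∑ t ∈ Icc (τ + 1) T, G t / b t := by
        rw [Finset.mul_sum]
      rw [hms] at hsum
      have hm : -(η / 2) * ∑ t ∈ Icc (τ + 1) T, G t / b t ≤ -(η / 2) * (b T - b τ) := by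
        have := mul_le_mul_of_nonneg_left h1 (by positivity : (0:ℝ) ≤ η / 2)
        linarith
      linarith
    have hFsT : Fstar ≤ F (x (T + 1)) := hinf.1 (Set.mem_range_self _)
    -- Combine
    have hcomb : η / 2 * (b T - b τ) ≤ (F (x 1) - Fstar)
        + L * η ^ 2 * (Real.log (b τ) - Real.log b₀) - η * (b τ - b₀) := by
      linarith
    have hkey : b T ≤ b τ + (2 * (F (x 1) - Fstar) / η
        + 2 * η * L * (Real.log (b τ) - Real.log b₀) - 2 * (b τ - b₀)) := by
      have heq : 2 * (F (x 1) - Fstar) / η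
          + 2 * η * L * (Real.log (b τ) - Real.log b₀) - 2 * (b τ - b₀)
          = 2 * ((F (x 1) - Fstar)
            + L * η ^ 2 * (Real.log (b τ) - Real.log b₀) - η * (b τ - b₀)) / η := by
        field_simp
      rw [heq, ← sub_le_iff_le_add', le_div_iff₀ hη]
      linarith
    have hcm : 2 * η * L * (Real.log (b τ) - Real.log b₀)
        ≤ 2 * η * L * max (Real.log (η * L / b₀)) 0 :=
      mul_le_mul_of_nonneg_left hτlog (by positivity)
    have hbτ := hblb τ
    linarith
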